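/- The maximal-volume centered ellipsoid contained in the product of balls B_X^n(√ħ) × B_P^n(√ħ) ⊆ ℝ^{2n} is the ball B^{2n}(√ħ): if Q is a real symmetric positive definite 2n×2n matrix and the ellipsoid E = {z ∈ ℝ^{2n} : Qz·z ≤ ħ} satisfies E ⊆ B_X^n(√ħ) × B_P^n(√ħ), then the Lebesgue measure of E is at most that of B^{2n}(√ħ), with equality if and only if E = B^{2n}(√ħ). -/

import Mathlib

open Matrix ComplexOrder MeasureTheory

noncomputable section

/-- Phase space ℝ^{2n} ≃ ℝⁿ × ℝⁿ, with coordinates z = (x,p). -/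
abbrev PS (n : ℕ) := Fin n ⊕ Fin n → ℝ

/-- The standard symplectic matrix J = [[0, I], [-I, 0]]. -/
def Jmat (n : ℕ) : Matrix (Fin n ⊕ Fin n) (Fin n ⊕ Fin n) ℝ :=
  Matrix.fromBlocks 0 1 (-1) 0

/-- The standard symplectic form ω(z,z′) = (Jz)·z′. -/
def symp (n : ℕ) (z z' : PS n) : ℝ := (Jmat n).mulVec z ⬝ᵥ z'

/-- The symplectic group Sp(n) = {S : SᵀJS = J}. -/
def Sp (n : ℕ) : Set (Matrix (Fin n ⊕ Fin n) (Fin n ⊕ Fin n) ℝ) :=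
  {S | Sᵀ * Jmat n * S = Jmat n}

/-- Symplectic ℏ-polar dual Ω^{ℏ,ω} = {z′ : sup_{z∈Ω} ω(z,z′) ≤ ℏ}. -/
def sympDual (n : ℕ) (ℏ : ℝ) (Ω : Set (PS n)) : Set (PS n) :=
  {z' | ∀ z ∈ Ω, symp n z z' ≤ ℏ}

/-- The closed Euclidean ball B^{2n}(√ℏ) of radius √ℏ centered at 0. -/
def ball2n (n : ℕ) (ℏ : ℝ) : Set (PS n) := {z | z ⬝ᵥ z ≤ ℏ}

/-- The covariance ellipsoid Ω_Σ = {z : (1/2)Σ⁻¹z·z ≤ 1}. -/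
def covEll (n : ℕ) (Sig : Matrix (Fin n ⊕ Fin n) (Fin n ⊕ Fin n) ℝ) : Set (PS n) :=
  {z | (1 / 2 : ℝ) * (Sig⁻¹.mulVec z ⬝ᵥ z) ≤ 1}

/-! ### Auxiliary lemmas -/

namespace JohnAux

variable {m : Type*} [Fintype m] [DecidableEq m]

/-- A real symmetric matrix `M` with `M - 1` positive semidefinite has determinant at least `1`,
with equality only if `M = 1`. -/
lemma one_le_det_of_sub_one_psd {M : Matrix m m ℝ} (h : (M - 1).PosSemidef) :
    1 ≤ M.det ∧ (M.det = 1 → M = 1) := by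
  have hH : M.IsHermitian := by
    have := h.1.add (Matrix.isHermitian_one (n := m) (α := ℝ))
    simpa using this
  have heig : ∀ i, 1 ≤ hH.eigenvalues i := by
    intro i
    have hb := hH.mulVec_eigenvectorBasis i
    set v : m → ℝ := ⇑(hH.eigenvectorBasis i) with hv
    have hvv : v ⬝ᵥ v = 1 := by
      have h1 : ‖hH.eigenvectorBasis i‖ = 1 := hH.eigenvectorBasis.orthonormal.1 i
      have h2 : (inner ℝ (hH.eigenvectorBasis i) (hH.eigenvectorBasis i) : ℝ) = 1 := by
        rw [real_inner_self_eq_norm_mul_norm, h1]; ring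
      rw [PiLp.inner_apply] at h2
      simpa [dotProduct, hv, sq] using h2
    have hp := h.dotProduct_mulVec_nonneg v
    have hmv : (M - 1) *ᵥ v = (hH.eigenvalues i - 1) • v := by
      rw [sub_mulVec, hb, one_mulVec, sub_smul, one_smul]
    rw [star_trivial, hmv, dotProduct_smul, hvv, smul_eq_mul, mul_one] at hp
    linarith
  have hdet : M.det = ∏ i, hH.eigenvalues i := by
    simpa using hH.det_eq_prod_eigenvalues
  have hprodge : ∀ s : Finset m, 1 ≤ ∏ i ∈ s, hH.eigenvalues i := by
    intro s
    calc (1 : ℝ) = ∏ _i ∈ s, (1 : ℝ) := by simp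
      _ ≤ ∏ i ∈ s, hH.eigenvalues i :=
        Finset.prod_le_prod (fun _ _ => zero_le_one) (fun i _ => heig i)
  constructor
  · rw [hdet]; exact hprodge Finset.univ
  · intro h1
    have h4 : ∏ j, hH.eigenvalues j = 1 := by rw [← hdet]; exact h1
    have heq : hH.eigenvalues = fun _ => (1 : ℝ) := by
      funext i
      have h2 := Finset.mul_prod_erase Finset.univ hH.eigenvalues (Finset.mem_univ i)
      have h3 := hprodge (Finset.univ.erase i)
      refine le_antisymm ?_ (heig i)
      nlinarith [heig i]
    have hspec := hH.spectral_theorem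
    rw [heq] at hspec
    have hdiag : Matrix.diagonal (RCLike.ofReal ∘ fun _ : m => (1 : ℝ)) = (1 : Matrix m m ℝ) := by
      simp [Function.comp]
    rw [hdiag, map_one] at hspec
    exact hspec

/-- Block determinant rigidity: if `Q` is positive definite and dominates both block
projections `[[1,0],[0,0]]` and `[[0,0],[0,1]]`, then `det Q ≥ 1` with equality only if `Q = 1`. -/
lemma det_rigidity {k : Type*} [Fintype k] [DecidableEq k]
    {Q : Matrix (k ⊕ k) (k ⊕ k) ℝ} (hQ : Q.PosDef)
    (hA : (Q - Matrix.fromBlocks 1 0 0 0).PosSemidef)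
    (hB : (Q - Matrix.fromBlocks 0 0 0 1).PosSemidef) :
    1 ≤ Q.det ∧ (Q.det = 1 → Q = 1) := by
  set A11 := Q.toBlocks₁₁ with hA11def
  set A12 := Q.toBlocks₁₂ with hA12def
  set A22 := Q.toBlocks₂₂ with hA22def
  have h21 : Q.toBlocks₂₁ = A12ᴴ := by
    ext i j
    have := congrFun (congrFun hQ.1 (Sum.inr i)) (Sum.inl j)
    simpa [hA12def, toBlocks₂₁, toBlocks₁₂, conjTranspose_apply] using this.symm
  have hQblocks : Q = Matrix.fromBlocks A11 A12 A12ᴴ A22 := by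
    rw [← h21, hA11def, hA12def, hA22def, fromBlocks_toBlocks]
  have hA11 : A11.PosDef := by
    refine Matrix.PosDef.of_dotProduct_mulVec_pos ?_ ?_
    · ext i j
      have := congrFun (congrFun hQ.1 (Sum.inl i)) (Sum.inl j)
      simpa [hA11def, toBlocks₁₁, conjTranspose_apply] using this
    · intro x hx
      have hz : (Sum.elim x 0 : k ⊕ k → ℝ) ≠ 0 := by
        intro h0
        apply hx
        funext i
        exact congrFun h0 (Sum.inl i)
      have hpos := hQ.dotProduct_mulVec_pos hz
      rw [star_trivial, hQblocks, fromBlocks_mulVec] at hpos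
      simpa [sumElim_dotProduct_sumElim, star_trivial] using hpos
  have hA22 : A22.PosDef := by
    refine Matrix.PosDef.of_dotProduct_mulVec_pos ?_ ?_
    · ext i j
      have := congrFun (congrFun hQ.1 (Sum.inr i)) (Sum.inr j)
      simpa [hA22def, toBlocks₂₂, conjTranspose_apply] using this
    · intro x hx
      have hz : (Sum.elim 0 x : k ⊕ k → ℝ) ≠ 0 := by
        intro h0
        apply hx
        funext i
        exact congrFun h0 (Sum.inr i)
      have hpos := hQ.dotProduct_mulVec_pos hz
      rw [star_trivial, hQblocks, fromBlocks_mulVec] at hpos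
      simpa [sumElim_dotProduct_sumElim, star_trivial] using hpos
  haveI iA11 : Invertible A11 := A11.invertibleOfIsUnitDet hA11.det_pos.ne'.isUnit
  haveI iA22 : Invertible A22 := A22.invertibleOfIsUnitDet hA22.det_pos.ne'.isUnit
  have hBblocks : Q - Matrix.fromBlocks 0 0 0 1 = Matrix.fromBlocks A11 A12 A12ᴴ (A22 - 1) := by
    rw [hQblocks, sub_eq_add_neg, Matrix.fromBlocks_neg, Matrix.fromBlocks_add]
    simp [sub_eq_add_neg]
  have hAblocks : Q - Matrix.fromBlocks 1 0 0 0 = Matrix.fromBlocks (A11 - 1) A12 A12ᴴ A22 := by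
    rw [hQblocks, sub_eq_add_neg, Matrix.fromBlocks_neg, Matrix.fromBlocks_add]
    simp [sub_eq_add_neg]
  have hS2 : ((A22 - A12ᴴ * A11⁻¹ * A12) - 1).PosSemidef := by
    have := (Matrix.PosDef.fromBlocks₁₁ A12 (A22 - 1) hA11).mp (hBblocks ▸ hB)
    rwa [sub_right_comm] at this
  have hS1 : ((A11 - A12 * A22⁻¹ * A12ᴴ) - 1).PosSemidef := by
    have := (Matrix.PosDef.fromBlocks₂₂ (A11 - 1) A12 hA22).mp (hAblocks ▸ hA)
    rwa [sub_right_comm] at this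
  have hA22m : (A22 - 1).PosSemidef := by
    have hpsd : (A12ᴴ * A11⁻¹ * A12).PosSemidef :=
      (hA11.inv.posSemidef).conjTranspose_mul_mul_same A12
    have := hS2.add hpsd
    have e : A22 - A12ᴴ * A11⁻¹ * A12 - 1 + A12ᴴ * A11⁻¹ * A12 = A22 - 1 := by
      abel
    rwa [e] at this
  have hA11m : (A11 - 1).PosSemidef := by
    have hpsd : (A12 * A22⁻¹ * A12ᴴ).PosSemidef :=
      (hA22.inv.posSemidef).mul_mul_conjTranspose_same A12
    have := hS1.add hpsd
    have e : A11 - A12 * A22⁻¹ * A12ᴴ - 1 + A12 * A22⁻¹ * A12ᴴ = A11 - 1 := by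
      abel
    rwa [e] at this
  have hdet2 : Q.det = A22.det * (A11 - A12 * A22⁻¹ * A12ᴴ).det := by
    rw [hQblocks, Matrix.det_fromBlocks₂₂, Matrix.invOf_eq_nonsing_inv]
  have hdet1 : Q.det = A11.det * (A22 - A12ᴴ * A11⁻¹ * A12).det := by
    rw [hQblocks, Matrix.det_fromBlocks₁₁, Matrix.invOf_eq_nonsing_inv]
  have hd22 := one_le_det_of_sub_one_psd hA22m
  have hd11 := one_le_det_of_sub_one_psd hA11m
  have hdS1 := one_le_det_of_sub_one_psd hS1
  have hdS2 := one_le_det_of_sub_one_psd hS2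
  constructor
  · rw [hdet2]
    nlinarith [hd22.1, hdS1.1]
  · intro h1
    have hq2 := hdet2; rw [h1] at hq2
    have hq1 := hdet1; rw [h1] at hq1
    have ha22 : A22.det = 1 := le_antisymm (by nlinarith [hd22.1, hdS1.1]) hd22.1
    have hs1 : (A11 - A12 * A22⁻¹ * A12ᴴ).det = 1 :=
      le_antisymm (by nlinarith [hd22.1, hdS1.1]) hdS1.1
    have ha11 : A11.det = 1 := le_antisymm (by nlinarith [hd11.1, hdS2.1]) hd11.1
    have hA22e : A22 = 1 := hd22.2 ha22
    have hA11e : A11 = 1 := hd11.2 ha11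
    have hS1e : A11 - A12 * A22⁻¹ * A12ᴴ = 1 := hdS1.2 hs1
    have hzero : A12 * A12ᴴ = 0 := by
      have hinv : (1 : Matrix k k ℝ)⁻¹ = 1 := Matrix.inv_eq_left_inv (by simp)
      rw [hA11e, hA22e, hinv, Matrix.mul_one] at hS1e
      exact sub_eq_self.mp hS1e
    have hA12e : A12 = 0 := by
      have : A12ᴴᴴ * A12ᴴ = 0 := by rwa [conjTranspose_conjTranspose]
      have := Matrix.conjTranspose_mul_self_eq_zero.mp this
      simpa using congrArg conjTranspose this
    rw [hQblocks, hA11e, hA22e, hA12e, Matrix.conjTranspose_zero, Matrix.fromBlocks_one]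

end JohnAux

/-- The John ellipsoid of B_X^n(√ℏ) × B_P^n(√ℏ): any centered ellipsoid contained in the
product of balls has volume at most that of B^{2n}(√ℏ), with equality iff it equals
B^{2n}(√ℏ). -/
theorem john_ellipsoid_product_of_balls (n : ℕ) (ℏ : ℝ) (hℏ : 0 < ℏ)
    (Q : Matrix (Fin n ⊕ Fin n) (Fin n ⊕ Fin n) ℝ) (hQ : Q.PosDef)
    (hE : {z : PS n | Q.mulVec z ⬝ᵥ z ≤ ℏ} ⊆
      {z : PS n | (z ∘ Sum.inl) ⬝ᵥ (z ∘ Sum.inl) ≤ ℏ ∧ (z ∘ Sum.inr) ⬝ᵥ (z ∘ Sum.inr) ≤ ℏ}) :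
    volume {z : PS n | Q.mulVec z ⬝ᵥ z ≤ ℏ} ≤ volume (ball2n n ℏ) ∧
    (volume {z : PS n | Q.mulVec z ⬝ᵥ z ≤ ℏ} = volume (ball2n n ℏ) ↔
      {z : PS n | Q.mulVec z ⬝ᵥ z ≤ ℏ} = ball2n n ℏ) := by
  classical
  -- the quadratic-form consequence of the inclusion
  have hquad : ∀ z : PS n, (z ∘ Sum.inl) ⬝ᵥ (z ∘ Sum.inl) ≤ Q *ᵥ z ⬝ᵥ z ∧
      (z ∘ Sum.inr) ⬝ᵥ (z ∘ Sum.inr) ≤ Q *ᵥ z ⬝ᵥ z := by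
    intro z
    by_cases hz : z = 0
    · simp [hz]
    · have hq : 0 < Q *ᵥ z ⬝ᵥ z := by
        have := hQ.dotProduct_mulVec_pos hz
        rwa [star_trivial, dotProduct_comm] at this
      set q : ℝ := Q *ᵥ z ⬝ᵥ z with hqdef
      set t : ℝ := Real.sqrt (ℏ / q) with htdef
      have ht2 : t ^ 2 = ℏ / q := Real.sq_sqrt (by positivity)
      have ht2q : t ^ 2 * q = ℏ := by
        rw [ht2, div_mul_cancel₀ _ hq.ne']
      have ht2pos : 0 < t ^ 2 := by
        rw [ht2]; positivity
      have hmem : t • z ∈ {z : PS n | Q.mulVec z ⬝ᵥ z ≤ ℏ} := by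
        show Q *ᵥ (t • z) ⬝ᵥ (t • z) ≤ ℏ
        rw [mulVec_smul, smul_dotProduct, dotProduct_smul, smul_eq_mul, smul_eq_mul,
          ← mul_assoc, ← sq, ← hqdef, ht2q]
      obtain ⟨h1, h2⟩ := hE hmem
      have hcl : (t • z) ∘ Sum.inl = t • (z ∘ Sum.inl) := rfl
      have hcr : (t • z) ∘ Sum.inr = t • (z ∘ Sum.inr) := rfl
      rw [hcl, smul_dotProduct, dotProduct_smul, smul_eq_mul, smul_eq_mul, ← mul_assoc,
        ← sq, ← ht2q] at h1
      rw [hcr, smul_dotProduct, dotProduct_smul, smul_eq_mul, smul_eq_mul, ← mul_assoc,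
        ← sq, ← ht2q] at h2
      exact ⟨le_of_mul_le_mul_left h1 ht2pos, le_of_mul_le_mul_left h2 ht2pos⟩
  -- positive semidefiniteness of Q minus the two block projections
  have hHA : (Matrix.fromBlocks (1 : Matrix (Fin n) (Fin n) ℝ) (0 : Matrix (Fin n) (Fin n) ℝ)
      (0 : Matrix (Fin n) (Fin n) ℝ) (0 : Matrix (Fin n) (Fin n) ℝ)).IsHermitian := by
    show _ᴴ = _
    rw [Matrix.fromBlocks_conjTranspose]
    simp
  have hHB : (Matrix.fromBlocks (0 : Matrix (Fin n) (Fin n) ℝ) (0 : Matrix (Fin n) (Fin n) ℝ)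
      (0 : Matrix (Fin n) (Fin n) ℝ) (1 : Matrix (Fin n) (Fin n) ℝ)).IsHermitian := by
    show _ᴴ = _
    rw [Matrix.fromBlocks_conjTranspose]
    simp
  have hfbl : ∀ x : PS n,
      Matrix.fromBlocks (1 : Matrix (Fin n) (Fin n) ℝ) (0 : Matrix (Fin n) (Fin n) ℝ)
        (0 : Matrix (Fin n) (Fin n) ℝ) (0 : Matrix (Fin n) (Fin n) ℝ) *ᵥ x ⬝ᵥ x
        = (x ∘ Sum.inl) ⬝ᵥ (x ∘ Sum.inl) := by
    intro x
    conv_lhs => rw [← Sum.elim_comp_inl_inr x]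
    rw [Matrix.fromBlocks_mulVec, sumElim_dotProduct_sumElim]
    simp
  have hfbr : ∀ x : PS n,
      Matrix.fromBlocks (0 : Matrix (Fin n) (Fin n) ℝ) (0 : Matrix (Fin n) (Fin n) ℝ)
        (0 : Matrix (Fin n) (Fin n) ℝ) (1 : Matrix (Fin n) (Fin n) ℝ) *ᵥ x ⬝ᵥ x
        = (x ∘ Sum.inr) ⬝ᵥ (x ∘ Sum.inr) := by
    intro x
    conv_lhs => rw [← Sum.elim_comp_inl_inr x]
    rw [Matrix.fromBlocks_mulVec, sumElim_dotProduct_sumElim]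
    simp
  have hPSDA : (Q - Matrix.fromBlocks 1 0 0 0).PosSemidef := by
    refine Matrix.PosSemidef.of_dotProduct_mulVec_nonneg (hQ.1.sub hHA) fun x => ?_
    rw [star_trivial, sub_mulVec, dotProduct_sub, sub_nonneg, dotProduct_comm,
      dotProduct_comm x (Q *ᵥ x)]
    rw [hfbl x]
    exact (hquad x).1
  have hPSDB : (Q - Matrix.fromBlocks 0 0 0 1).PosSemidef := by
    refine Matrix.PosSemidef.of_dotProduct_mulVec_nonneg (hQ.1.sub hHB) fun x => ?_
    rw [star_trivial, sub_mulVec, dotProduct_sub, sub_nonneg, dotProduct_comm,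
      dotProduct_comm x (Q *ᵥ x)]
    rw [hfbr x]
    exact (hquad x).2
  have hdet := JohnAux.det_rigidity hQ hPSDA hPSDB
  -- the square root of Q and the change of variables
  open scoped MatrixOrder in
  set R : Matrix (Fin n ⊕ Fin n) (Fin n ⊕ Fin n) ℝ := CFC.sqrt Q with hRdef
  open scoped MatrixOrder in
  have hRR : R * R = Q := CFC.sqrt_mul_sqrt_self Q hQ.posSemidef.nonneg
  have hRH : Rᵀ = R := by
    rw [← Matrix.conjTranspose_eq_transpose_of_trivial]
    open scoped MatrixOrder in
    exact (CFC.sqrt_nonneg Q).posSemidef.1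
  have hEpre : {z : PS n | Q.mulVec z ⬝ᵥ z ≤ ℏ} = (Matrix.toLin' R) ⁻¹' (ball2n n ℏ) := by
    ext z
    have hcalc : Q *ᵥ z ⬝ᵥ z = (R *ᵥ z) ⬝ᵥ (R *ᵥ z) := by
      rw [← hRR, ← mulVec_mulVec, dotProduct_comm, dotProduct_mulVec, ← Matrix.mulVec_transpose,
        hRH]
    simp only [Set.mem_setOf_eq, Set.mem_preimage, Matrix.toLin'_apply, ball2n, hcalc]
  have hdetR : LinearMap.det (Matrix.toLin' R) = R.det := LinearMap.det_toLin' R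
  have hRdQ : R.det * R.det = Q.det := by rw [← Matrix.det_mul, hRR]
  have hQpos : (0 : ℝ) < Q.det := lt_of_lt_of_le one_pos hdet.1
  have hRne : R.det ≠ 0 := by
    intro h
    rw [h, mul_zero] at hRdQ
    exact hQpos.ne hRdQ
  have habs2 : |R.det| * |R.det| = Q.det := by
    rw [← abs_mul, hRdQ, abs_of_pos hQpos]
  have habs : 1 ≤ |R.det| := by
    nlinarith [abs_nonneg R.det, hdet.1]
  have hvol : volume {z : PS n | Q.mulVec z ⬝ᵥ z ≤ ℏ}
      = ENNReal.ofReal |R.det|⁻¹ * volume (ball2n n ℏ) := by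
    rw [hEpre, Measure.addHaar_preimage_linearMap volume (by rw [hdetR]; exact hRne) (ball2n n ℏ),
      hdetR, abs_inv]
  -- volume of the ball is positive and finite
  have hVpos : 0 < volume (ball2n n ℏ) := by
    have hc : Continuous fun z : PS n => z ⬝ᵥ z := by
      simp only [dotProduct]
      exact continuous_finset_sum _ fun i _ => (continuous_apply i).mul (continuous_apply i)
    have hopen : IsOpen {z : PS n | z ⬝ᵥ z < ℏ} := isOpen_lt hc continuous_const
    have hsub : {z : PS n | z ⬝ᵥ z < ℏ} ⊆ ball2n n ℏ := by
      intro z hz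
      show z ⬝ᵥ z ≤ ℏ
      exact le_of_lt hz
    have hne : (0 : PS n) ∈ {z : PS n | z ⬝ᵥ z < ℏ} := by
      simp [dotProduct, hℏ]
    exact lt_of_lt_of_le (hopen.measure_pos volume ⟨0, hne⟩) (measure_mono hsub)
  have hVfin : volume (ball2n n ℏ) ≠ ⊤ := by
    have hsub : ball2n n ℏ ⊆
        Set.pi Set.univ (fun _ : Fin n ⊕ Fin n => Set.Icc (-Real.sqrt ℏ) (Real.sqrt ℏ)) := by
      intro z hz i _
      have hz' : z ⬝ᵥ z ≤ ℏ := hz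
      have h1 : z i * z i ≤ z ⬝ᵥ z :=
        Finset.single_le_sum (f := fun j => z j * z j)
          (fun j _ => mul_self_nonneg _) (Finset.mem_univ i)
      have h2 : |z i| ≤ Real.sqrt ℏ := by
        have := Real.sqrt_le_sqrt (le_trans h1 hz')
        rwa [Real.sqrt_mul_self_eq_abs] at this
      exact abs_le.mp h2
    refine ne_top_of_le_ne_top ?_ (measure_mono hsub)
    rw [volume_pi_pi]
    refine (ENNReal.prod_lt_top fun i _ => ?_).ne
    rw [Real.volume_Icc]
    exact ENNReal.ofReal_lt_top
  have hc1 : ENNReal.ofReal |R.det|⁻¹ ≤ 1 := by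
    have : |R.det|⁻¹ ≤ 1 := by
      rw [inv_le_one_iff₀]
      right; exact habs
    calc ENNReal.ofReal |R.det|⁻¹ ≤ ENNReal.ofReal 1 := ENNReal.ofReal_le_ofReal this
      _ = 1 := ENNReal.ofReal_one
  constructor
  · calc volume {z : PS n | Q.mulVec z ⬝ᵥ z ≤ ℏ}
        = ENNReal.ofReal |R.det|⁻¹ * volume (ball2n n ℏ) := hvol
      _ ≤ 1 * volume (ball2n n ℏ) := mul_le_mul_left hc1 _
      _ = volume (ball2n n ℏ) := one_mul _
  · constructor
    · intro hv
      have hQ1 : Q = 1 := by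
        apply hdet.2
        by_contra hne
        have hgt : 1 < |R.det| := by
          rcases lt_or_eq_of_le habs with h | h
          · exact h
          · exfalso; apply hne; rw [← habs2, ← h, one_mul]
        have hlt : ENNReal.ofReal |R.det|⁻¹ < 1 := by
          rw [← ENNReal.ofReal_one]
          exact ENNReal.ofReal_lt_ofReal_iff one_pos |>.mpr (inv_lt_one_of_one_lt₀ hgt)
        have : volume {z : PS n | Q.mulVec z ⬝ᵥ z ≤ ℏ} < volume (ball2n n ℏ) := by
          rw [hvol]
          calc ENNReal.ofReal |R.det|⁻¹ * volume (ball2n n ℏ)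
              < 1 * volume (ball2n n ℏ) := by
                rw [ENNReal.mul_lt_mul_iff_left hVpos.ne' hVfin]
                exact hlt
            _ = volume (ball2n n ℏ) := one_mul _
        rw [hv] at this
        exact lt_irrefl _ this
      ext z
      simp [hQ1, ball2n, Matrix.one_mulVec]
    · intro hset
      rw [hset]
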